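/- If the cost-free game G^0 has a Nash equilibrium σ whose run satisfies Υ (i.e., NE_Υ(G^0) ≠ ∅), then Υ is E-Nash implementable in G using a static taxation scheme: there exists a static τ with NE_Υ(G^τ) ≠ ∅. -/

import Mathlib

open Filter

/-- if the cost-free game `G^0` has a Nash equilibrium whose run
satisfies `Υ`, then `Υ` is E-Nash implementable in `G` by a static taxation
scheme: there is a static scheme `τ` (nonnegative per-step taxes) such that
the taxed game `G^τ` has a Nash equilibrium whose run satisfies `Υ`.
Utilities of a game with cost function `D` are lexicographic, built from the
limit-average cost along the run and the maximal per-step cost `⨆ sa, D i sa`. -/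
theorem stmt_18 {ι State Act : Type} [DecidableEq ι]
    [Fintype State] [Fintype Act] [Nonempty State] [Nonempty Act]
    {S : ι → Type}
    (run : (∀ i, S i) → ℕ → State × Act)
    (sat : ι → (ℕ → State × Act) → Prop) [∀ i ρ, Decidable (sat i ρ)]
    (satΥ : (ℕ → State × Act) → Prop)
    (C : ι → State × Act → ℝ) (hC : ∀ i sa, 0 ≤ C i sa)
    (lavg : (ι → State × Act → ℝ) → ι → (∀ i, S i) → ℝ)
    (hlavg : ∀ D i σ, lavg D i σ =
      liminf (fun t : ℕ => (1 / (t + 1 : ℝ)) *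
        ∑ j ∈ Finset.range (t + 1), D i (run σ j)) atTop)
    (u : (ι → State × Act → ℝ) → ι → (∀ i, S i) → ℝ)
    (hu : ∀ D i σ, u D i σ =
      if sat i (run σ) then 1 + (⨆ sa : State × Act, D i sa) - lavg D i σ
      else - lavg D i σ)
    (NE : (ι → State × Act → ℝ) → Set (∀ i, S i))
    (hNE : ∀ D σ, σ ∈ NE D ↔ ∀ i (s' : S i),
      ¬ u D i (Function.update σ i s') > u D i σ)
    (hE0 : ∃ σ, σ ∈ NE (fun _ _ => 0) ∧ satΥ (run σ)) :
    ∃ τ : ι → State × Act → ℝ, (∀ i sa, 0 ≤ τ i sa) ∧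
      ∃ σ, σ ∈ NE (fun i sa => C i sa + τ i sa) ∧ satΥ (run σ) := by
  obtain ⟨σ₀, hσ₀, hsatΥ⟩ := hE0
  set c : ι → ℝ := fun i => ⨆ sa : State × Act, C i sa with hc
  have hbdd : ∀ i, BddAbove (Set.range (C i)) := fun i => (Set.finite_range _).bddAbove
  have hle : ∀ i sa, C i sa ≤ c i := fun i sa => le_ciSup (hbdd i) sa
  have hc0 : ∀ i, 0 ≤ c i := fun i => le_trans (hC i (Classical.arbitrary _)) (hle i _)
  refine ⟨fun i sa => c i - C i sa, fun i sa => sub_nonneg.2 (hle i sa), σ₀, ?_, hsatΥ⟩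
  -- the taxed cost is constant `c i`
  have hconst : (fun i sa => C i sa + (c i - C i sa)) = fun i (_ : State × Act) => c i := by
    funext i sa; ring
  rw [hconst]
  -- limit averages
  have hlavg_const : ∀ (r : ι → ℝ) i σ, lavg (fun i _ => r i) i σ = r i := by
    intro r i σ
    rw [hlavg]
    have : (fun t : ℕ => (1 / (t + 1 : ℝ)) *
        ∑ j ∈ Finset.range (t + 1), r i) = fun _ => r i := by
      funext t
      rw [Finset.sum_const, Finset.card_range, nsmul_eq_mul]
      have ht : (t + 1 : ℝ) ≠ 0 := by positivity
      field_simp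
      push_cast
      ring
    rw [this, liminf_const]
  -- utilities in the two games
  have husup : ∀ i, (⨆ _ : State × Act, c i) = c i := fun i => ciSup_const
  have huτ : ∀ i σ, u (fun i _ => c i) i σ = if sat i (run σ) then 1 else - c i := by
    intro i σ
    rw [hu, hlavg_const, husup]
    by_cases h : sat i (run σ) <;> simp [h]
  have hu0 : ∀ i σ, u (fun _ _ => (0:ℝ)) i σ = if sat i (run σ) then 1 else 0 := by
    intro i σ
    have h0 : (fun (_ : ι) (_ : State × Act) => (0:ℝ)) = fun i _ => (fun _ => (0:ℝ)) i := rfl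
    rw [hu]
    rw [show lavg (fun _ _ => (0:ℝ)) i σ = 0 from hlavg_const (fun _ => 0) i σ]
    by_cases h : sat i (run σ) <;> simp [h, ciSup_const]
  -- NE transfer
  rw [hNE]
  intro i s'
  rw [huτ, huτ]
  have h0 := (hNE _ _).1 hσ₀ i s'
  rw [hu0, hu0] at h0
  by_cases h1 : sat i (run (Function.update σ₀ i s')) <;>
    by_cases h2 : sat i (run σ₀) <;>
    simp [h1, h2] at h0 ⊢
  all_goals linarith [hc0 i]
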